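/- arXiv:1103.2877 — 6 statements merged into one kernel-verified Lean document; each statement's English description precedes it below -/
import Mathlib

section
/- For antichains α, β of subsets of a finite set N with α ≤ β, β is an immediate successor of α (i.e., α < β and no antichain γ satisfies α < γ < β) if and only if α < β, β \ α = {S} for a single set S, and every proper subset X of S is contained in some member of α. -/
open Finset

/-- Families of finite subsets of ℕ. -/
abbrev Fam := Finset (Finset ℕ)

/-- `α` is an antichain of subsets of `N`: all members are subsets of `N`
and no member is a (proper) subset of another. -/
def IsAC (N : Finset ℕ) (α : Fam) : Prop :=
  (∀ A ∈ α, A ⊆ N) ∧ ∀ A ∈ α, ∀ B ∈ α, A ⊆ B → A = B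

instance (N : Finset ℕ) : DecidablePred (IsAC N) := fun α => by
  unfold IsAC; infer_instance

/-- The partial order on antichains: every member of `α` is contained in some member of `β`. -/
def amle (α β : Fam) : Prop := ∀ A ∈ α, ∃ B ∈ β, A ⊆ B

instance (α β : Fam) : Decidable (amle α β) := by
  unfold amle; infer_instance

/-- `sup` of a family: its maximal elements under inclusion. -/
def maxels (S : Fam) : Fam := S.filter (fun A => ∀ B ∈ S, A ⊆ B → A = B)

/-- The span of an antichain: the union of its members. -/
def sp (α : Fam) : Finset ℕ := α.sup id

/-- Join: maximal elements of the union. -/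
def joinAC (α β : Fam) : Fam := maxels (α ∪ β)

/-- Meet: maximal elements of the pairwise intersections. -/
def meetAC (α β : Fam) : Fam := maxels ((α ×ˢ β).image fun p => p.1 ∩ p.2)

/-- Projection onto `M`: maximal elements of {A ∩ M : A ∈ α}. -/
def proj (M : Finset ℕ) (α : Fam) : Fam := maxels (α.image (· ∩ M))

/-- External product. -/
def xprod (α β : Fam) : Fam :=
  maxels ((α ×ˢ β).image fun p => (p.1 \ sp β) ∪ (p.2 \ sp α) ∪ (p.1 ∩ p.2))

/-- The finite set of all antichains of subsets of `N`. -/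
def AMTf (N : Finset ℕ) : Finset Fam := N.powerset.powerset.filter (IsAC N)

/-- The interval `[a, b]` inside `AMTf N`, as a `Finset`. -/
def intervalF (N : Finset ℕ) (a b : Fam) : Finset Fam :=
  (AMTf N).filter (fun κ => amle a κ ∧ amle κ b)

/-- The interval `[a, b]` of antichains of subsets of `N`, as a `Set`. -/
def intervalSet (N : Finset ℕ) (a b : Fam) : Set Fam :=
  {κ | IsAC N κ ∧ amle a κ ∧ amle κ b}

/-- n-ary join of a family indexed by the members of `σ`. -/
def bigJoin (σ : Fam) (κ : Finset ℕ → Fam) : Fam := maxels (σ.sup κ)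

/-- n-ary external product of a family indexed by the members of `σ`. -/
noncomputable def bigX (σ : Fam) (κ : Finset ℕ → Fam) : Fam :=
  (σ.toList.map κ).foldr xprod {(∅ : Finset ℕ)}

/-- Nonempty antichains of subsets of `S` with span exactly `S`. -/
def Upsf (S : Finset ℕ) : Finset Fam :=
  S.powerset.powerset.filter (fun κ => IsAC S κ ∧ κ ≠ ∅ ∧ sp κ = S)

lemma amle_antisymm {N : Finset ℕ} {α γ : Fam} (hα : IsAC N α) (hγ : IsAC N γ)
    (h1 : amle α γ) (h2 : amle γ α) : α = γ := by
  apply Finset.Subset.antisymm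
  · intro A hA
    obtain ⟨C, hC, hAC⟩ := h1 A hA
    obtain ⟨A', hA', hCA'⟩ := h2 C hC
    have hAA' := hα.2 A hA A' hA' (hAC.trans hCA')
    subst hAA'
    have : A = C := Finset.Subset.antisymm hAC hCA'
    exact this ▸ hC
  · intro C hC
    obtain ⟨A, hA, hCA⟩ := h2 C hC
    obtain ⟨C', hC', hAC'⟩ := h1 A hA
    have hCC' := hγ.2 C hC C' hC' (hCA.trans hAC')
    subst hCC'
    have : C = A := Finset.Subset.antisymm hCA hAC'
    exact this ▸ hA

lemma mem_maxels {S : Fam} {A : Finset ℕ} :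
    A ∈ maxels S ↔ A ∈ S ∧ ∀ B ∈ S, A ⊆ B → A = B := by
  simp [maxels]

lemma exists_maxels {S : Fam} {A : Finset ℕ} (h : A ∈ S) :
    ∃ B ∈ maxels S, A ⊆ B := by
  obtain ⟨m, hm, hmax⟩ : ∃ m ∈ S.filter (A ⊆ ·), ∀ x ∈ S.filter (A ⊆ ·), ¬ m < x := by
    obtain ⟨m, hm, hmax⟩ := Finset.exists_maximal (s := S.filter (A ⊆ ·)) ⟨A, by simp [h]⟩
    exact ⟨m, hm, fun x hx hlt => lt_irrefl _ (hlt.trans_le (hmax hx hlt.le))⟩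
  simp only [Finset.mem_filter] at hm
  refine ⟨m, mem_maxels.2 ⟨hm.1, fun B hB hmB => ?_⟩, hm.2⟩
  by_contra hne
  exact hmax B (Finset.mem_filter.mpr ⟨hB, hm.2.trans hmB⟩)
    (Finset.ssubset_iff_subset_ne.mpr ⟨hmB, hne⟩)

lemma maxels_isAC {N : Finset ℕ} {F : Fam} (hF : ∀ A ∈ F, A ⊆ N) :
    IsAC N (maxels F) := by
  constructor
  · intro A hA; exact hF A (mem_maxels.1 hA).1
  · intro A hA B hB hAB
    exact (mem_maxels.1 hA).2 B (mem_maxels.1 hB).1 hAB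

/-- A member of `β` not in `α` cannot be contained in any member of `α`
(when `α ≤ β` and both are antichains). -/
lemma not_covered {N : Finset ℕ} {α β : Fam} (hα : IsAC N α) (hβ : IsAC N β)
    (hle : amle α β) {B : Finset ℕ} (hB : B ∈ β) (hBα : B ∉ α) :
    ∀ A ∈ α, ¬ B ⊆ A := by
  intro A hA hBA
  obtain ⟨B', hB', hAB'⟩ := hle A hA
  have hBB' := hβ.2 B hB B' hB' (hBA.trans hAB')
  subst hBB'
  exact hBα ((Finset.Subset.antisymm hAB' hBA) ▸ hA)

/-- A "sandwich" construction: `maxels F` is a strictly intermediate antichain. -/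
lemma sandwich {N : Finset ℕ} {α β : Fam} (hα : IsAC N α) (hβ : IsAC N β)
    (F : Fam) (hFN : ∀ A ∈ F, A ⊆ N) (hαF : α ⊆ F)
    (hFβ : ∀ A ∈ F, ∃ B ∈ β, A ⊆ B)
    {T : Finset ℕ} (hT : T ∈ F) (hTα : ∀ A ∈ α, ¬ T ⊆ A)
    {S : Finset ℕ} (hS : S ∈ β) (hSF : ∀ C ∈ F, ¬ S ⊆ C) :
    ∃ γ : Fam, IsAC N γ ∧ (amle α γ ∧ α ≠ γ) ∧ (amle γ β ∧ γ ≠ β) := by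
  refine ⟨maxels F, maxels_isAC hFN, ⟨?_, ?_⟩, ?_, ?_⟩
  · intro A hA; exact exists_maxels (hαF hA)
  · intro hαγ
    obtain ⟨C, hC, hTC⟩ := exists_maxels hT
    rw [← hαγ] at hC
    exact hTα C hC hTC
  · intro C hC; exact hFβ C (mem_maxels.1 hC).1
  · intro hγβ
    have hSγ : S ∈ maxels F := hγβ ▸ hS
    exact hSF S (mem_maxels.1 hSγ).1 (Finset.Subset.refl S)

/-- characterisation of immediate successors among antichains. -/
theorem immediate_successor_iff (N : Finset ℕ) (α β : Fam)
    (hα : IsAC N α) (hβ : IsAC N β) :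
    ((amle α β ∧ α ≠ β) ∧
      ¬ ∃ γ : Fam, IsAC N γ ∧ (amle α γ ∧ α ≠ γ) ∧ (amle γ β ∧ γ ≠ β)) ↔
    ((amle α β ∧ α ≠ β) ∧
      ∃ S : Finset ℕ, β \ α = {S} ∧ ∀ X : Finset ℕ, X ⊂ S → ∃ X' ∈ α, X ⊆ X') := by
  constructor
  · rintro ⟨⟨hle, hne⟩, hno⟩
    refine ⟨⟨hle, hne⟩, ?_⟩
    -- β \ α is nonempty
    have hnonempty : (β \ α).Nonempty := by
      rw [Finset.sdiff_nonempty]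
      intro hβα
      exact hne (amle_antisymm hα hβ hle (fun B hB => ⟨B, hβα hB, Finset.Subset.refl B⟩))
    obtain ⟨S, hS⟩ := hnonempty
    have hSβ : S ∈ β := (Finset.mem_sdiff.1 hS).1
    have hSα : S ∉ α := (Finset.mem_sdiff.1 hS).2
    have hSnc : ∀ A ∈ α, ¬ S ⊆ A := not_covered hα hβ hle hSβ hSα
    refine ⟨S, ?_, ?_⟩
    · -- β \ α = {S}
      apply Finset.eq_singleton_iff_unique_mem.2
      refine ⟨hS, fun T hT => ?_⟩
      have hTβ : T ∈ β := (Finset.mem_sdiff.1 hT).1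
      have hTα : T ∉ α := (Finset.mem_sdiff.1 hT).2
      by_contra hTS
      apply hno
      refine sandwich hα hβ (α ∪ β.erase S) ?_ Finset.subset_union_left ?_
        (T := T) ?_ (not_covered hα hβ hle hTβ hTα) (S := S) hSβ ?_
      · intro A hA
        rcases Finset.mem_union.1 hA with h | h
        · exact hα.1 A h
        · exact hβ.1 A (Finset.mem_of_mem_erase h)
      · intro A hA
        rcases Finset.mem_union.1 hA with h | h
        · exact hle A h
        · exact ⟨A, Finset.mem_of_mem_erase h, Finset.Subset.refl A⟩
      · exact Finset.mem_union_right _ (Finset.mem_erase.2 ⟨hTS, hTβ⟩)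
      · intro C hC hSC
        rcases Finset.mem_union.1 hC with h | h
        · exact hSnc C h hSC
        · have hCβ := Finset.mem_of_mem_erase h
          have := hβ.2 S hSβ C hCβ hSC
          exact (Finset.mem_erase.1 h).1 this.symm
    · -- minimality property
      intro X hX
      by_contra hXnc
      push_neg at hXnc
      apply hno
      refine sandwich hα hβ (insert X α) ?_ (Finset.subset_insert X α) ?_
        (T := X) (Finset.mem_insert_self X α) ?_ (S := S) hSβ ?_
      · intro A hA
        rcases Finset.mem_insert.1 hA with h | h
        · exact h ▸ (hX.subset.trans (hβ.1 S hSβ))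
        · exact hα.1 A h
      · intro A hA
        rcases Finset.mem_insert.1 hA with h | h
        · exact ⟨S, hSβ, h ▸ hX.subset⟩
        · exact hle A h
      · intro A hA hXA; exact hXnc A hA hXA
      · intro C hC hSC
        rcases Finset.mem_insert.1 hC with h | h
        · rw [h] at hSC
          exact absurd (Finset.Subset.antisymm hX.subset hSC) hX.ne
        · exact hSnc C h hSC
  · rintro ⟨⟨hle, hne⟩, S, hSsingle, hmin⟩
    refine ⟨⟨hle, hne⟩, ?_⟩
    rintro ⟨γ, hγ, ⟨hαγ, hαneγ⟩, hγβ, hγneβ⟩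
    have hSmem : S ∈ β \ α := hSsingle ▸ Finset.mem_singleton_self S
    have hSβ : S ∈ β := (Finset.mem_sdiff.1 hSmem).1
    have hSα : S ∉ α := (Finset.mem_sdiff.1 hSmem).2
    have honly : ∀ B ∈ β, B ≠ S → B ∈ α := by
      intro B hB hBS
      by_contra hBα
      exact hBS (Finset.mem_singleton.1 (hSsingle ▸ Finset.mem_sdiff.2 ⟨hB, hBα⟩))
    by_cases hSγ : S ∈ γ
    · -- then γ = β
      apply hγneβ
      apply amle_antisymm hγ hβ hγβ
      intro B hB
      by_cases hBS : B = S
      · exact ⟨S, hSγ, hBS ▸ Finset.Subset.refl B⟩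
      · obtain ⟨C, hC, hBC⟩ := hαγ B (honly B hB hBS)
        exact ⟨C, hC, hBC⟩
    · -- then γ = α
      apply hαneγ
      apply amle_antisymm hα hγ hαγ
      intro C hC
      obtain ⟨B, hB, hCB⟩ := hγβ C hC
      by_cases hBS : B = S
      · subst hBS
        have hCS : C ⊂ B := Finset.ssubset_iff_subset_ne.2 ⟨hCB, fun h => hSγ (h ▸ hC)⟩
        exact hmin C hCS
      · exact ⟨B, honly B hB hBS, hCB⟩
end

section
/- The external product on nonempty antichains is commutative and associative, has neutral element {∅} and annihilating element ∅ (the empty antichain): α × {∅} = α and α × ∅ = ∅ for any antichain α. -/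
open Finset

section Aux

lemma mem_sp {α : Fam} {x : ℕ} : x ∈ sp α ↔ ∃ A ∈ α, x ∈ A := by
  simp [sp, Finset.mem_sup]

lemma subset_sp {α : Fam} {A : Finset ℕ} (h : A ∈ α) : A ⊆ sp α :=
  fun x hx => mem_sp.2 ⟨A, h, hx⟩

lemma maxels_subset (S : Fam) : maxels S ⊆ S := Finset.filter_subset _ _

lemma exists_maximal_sup {S : Fam} {A : Finset ℕ} (hA : A ∈ S) :
    ∃ B ∈ maxels S, A ⊆ B := by
  classical
  obtain ⟨B, hB, hmax⟩ := Finset.exists_max_image (S.filter (A ⊆ ·)) Finset.card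
    ⟨A, by simp [hA]⟩
  simp only [Finset.mem_filter] at hB
  refine ⟨B, ?_, hB.2⟩
  simp only [maxels, Finset.mem_filter]
  refine ⟨hB.1, fun C hC hBC => ?_⟩
  have hC' : C ∈ S.filter (A ⊆ ·) := by
    simp only [Finset.mem_filter]; exact ⟨hC, hB.2.trans hBC⟩
  exact Finset.eq_of_subset_of_card_le hBC (hmax C hC')

lemma sp_maxels (S : Fam) : sp (maxels S) = sp S := by
  apply subset_antisymm
  · intro x hx
    obtain ⟨A, hA, hxA⟩ := mem_sp.1 hx
    exact mem_sp.2 ⟨A, maxels_subset S hA, hxA⟩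
  · intro x hx
    obtain ⟨A, hA, hxA⟩ := mem_sp.1 hx
    obtain ⟨B, hB, hAB⟩ := exists_maximal_sup hA
    exact mem_sp.2 ⟨B, hB, hAB hxA⟩

lemma mem_maxels_of {S T : Fam} (h1 : ∀ s ∈ S, ∃ t ∈ T, s ⊆ t)
    (h2 : ∀ t ∈ T, ∃ s ∈ S, t ⊆ s) {A : Finset ℕ} (hA : A ∈ maxels S) :
    A ∈ maxels T := by
  simp only [maxels, Finset.mem_filter] at hA ⊢
  obtain ⟨hAS, hmax⟩ := hA
  obtain ⟨t, ht, hAt⟩ := h1 A hAS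
  obtain ⟨s, hs, hts⟩ := h2 t ht
  have hAs : A = s := hmax s hs (hAt.trans hts)
  have hAteq : A = t := Finset.Subset.antisymm hAt (by rw [hAs]; exact hts)
  refine ⟨hAteq ▸ ht, fun B hB hAB => ?_⟩
  obtain ⟨s', hs', hBs'⟩ := h2 B hB
  have : A = s' := hmax s' hs' (hAB.trans hBs')
  exact Finset.Subset.antisymm hAB (this ▸ hBs')

lemma maxels_eq {S T : Fam} (h1 : ∀ s ∈ S, ∃ t ∈ T, s ⊆ t)
    (h2 : ∀ t ∈ T, ∃ s ∈ S, t ⊆ s) : maxels S = maxels T := by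
  ext A
  exact ⟨fun h => mem_maxels_of h1 h2 h, fun h => mem_maxels_of h2 h1 h⟩

/-- The raw (pre-maxels) external product. -/
def rawp (α β : Fam) : Fam :=
  (α ×ˢ β).image fun p => (p.1 \ sp β) ∪ (p.2 \ sp α) ∪ (p.1 ∩ p.2)

lemma xprod_eq_maxels_rawp (α β : Fam) : xprod α β = maxels (rawp α β) := rfl

lemma sp_rawp {α β : Fam} (hα : α.Nonempty) (hβ : β.Nonempty) :
    sp (rawp α β) = sp α ∪ sp β := by
  apply subset_antisymm
  · intro x hx
    obtain ⟨D, hD, hxD⟩ := mem_sp.1 hx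
    simp only [rawp, Finset.mem_image, Finset.mem_product] at hD
    obtain ⟨⟨A, B⟩, ⟨hA, hB⟩, rfl⟩ := hD
    simp only [Finset.mem_union, Finset.mem_sdiff, Finset.mem_inter] at hxD
    rcases hxD with (⟨h, _⟩ | ⟨h, _⟩) | ⟨h, _⟩
    · exact Finset.mem_union_left _ (subset_sp hA h)
    · exact Finset.mem_union_right _ (subset_sp hB h)
    · exact Finset.mem_union_left _ (subset_sp hA h)
  · intro x hx
    rcases Finset.mem_union.1 hx with h | h
    · obtain ⟨A, hA, hxA⟩ := mem_sp.1 h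
      by_cases hq : x ∈ sp β
      · obtain ⟨B, hB, hxB⟩ := mem_sp.1 hq
        refine mem_sp.2 ⟨_, Finset.mem_image.2 ⟨(A, B), Finset.mem_product.2 ⟨hA, hB⟩, rfl⟩, ?_⟩
        simp [hxA, hxB]
      · obtain ⟨B, hB⟩ := hβ
        refine mem_sp.2 ⟨_, Finset.mem_image.2 ⟨(A, B), Finset.mem_product.2 ⟨hA, hB⟩, rfl⟩, ?_⟩
        simp [hxA, hq]
    · obtain ⟨B, hB, hxB⟩ := mem_sp.1 h
      by_cases hp : x ∈ sp α
      · obtain ⟨A, hA, hxA⟩ := mem_sp.1 hp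
        refine mem_sp.2 ⟨_, Finset.mem_image.2 ⟨(A, B), Finset.mem_product.2 ⟨hA, hB⟩, rfl⟩, ?_⟩
        simp [hxA, hxB]
      · obtain ⟨A, hA⟩ := hα
        refine mem_sp.2 ⟨_, Finset.mem_image.2 ⟨(A, B), Finset.mem_product.2 ⟨hA, hB⟩, rfl⟩, ?_⟩
        simp [hxB, hp]

lemma core_assoc {A B C P Q S : Finset ℕ} (hA : A ⊆ P) (hB : B ⊆ Q) (hC : C ⊆ S) :
    ((((A \ Q) ∪ (B \ P) ∪ (A ∩ B)) \ S) ∪ (C \ (P ∪ Q)) ∪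
      (((A \ Q) ∪ (B \ P) ∪ (A ∩ B)) ∩ C))
    = ((A \ (Q ∪ S)) ∪ (((B \ S) ∪ (C \ Q) ∪ (B ∩ C)) \ P) ∪
      (A ∩ ((B \ S) ∪ (C \ Q) ∪ (B ∩ C)))) := by
  ext x
  have hA' : x ∈ A → x ∈ P := @hA x
  have hB' : x ∈ B → x ∈ Q := @hB x
  have hC' : x ∈ C → x ∈ S := @hC x
  simp only [Finset.mem_union, Finset.mem_sdiff, Finset.mem_inter]
  tauto

end Aux

/-- the external product is commutative and associative on nonempty
antichains, has neutral element `{∅}` and annihilating element `∅`. -/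
theorem xprod_comm_assoc_neutral_annihilator (N : Finset ℕ) (α β γ : Fam)
    (hα : IsAC N α) (hβ : IsAC N β) (hγ : IsAC N γ) :
    (α.Nonempty → β.Nonempty → xprod α β = xprod β α) ∧
    (α.Nonempty → β.Nonempty → γ.Nonempty →
      xprod (xprod α β) γ = xprod α (xprod β γ)) ∧
    xprod α ({(∅ : Finset ℕ)} : Fam) = α ∧
    xprod α (∅ : Fam) = (∅ : Fam) := by
  classical
  have key_comm : ∀ α β : Fam, rawp α β = rawp β α := by
    intro α β
    apply Finset.Subset.antisymm <;> intro D hD <;>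
      simp only [rawp, Finset.mem_image, Finset.mem_product] at hD ⊢
    · obtain ⟨⟨A, B⟩, ⟨hA, hB⟩, rfl⟩ := hD
      refine ⟨(B, A), ⟨hB, hA⟩, ?_⟩
      ext x
      simp only [Finset.mem_union, Finset.mem_sdiff, Finset.mem_inter]
      tauto
    · obtain ⟨⟨B, A⟩, ⟨hB, hA⟩, rfl⟩ := hD
      refine ⟨(A, B), ⟨hA, hB⟩, ?_⟩
      ext x
      simp only [Finset.mem_union, Finset.mem_sdiff, Finset.mem_inter]
      tauto
  refine ⟨fun _ _ => ?_, fun hαne hβne hγne => ?_, ?_, ?_⟩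
  · rw [xprod_eq_maxels_rawp, xprod_eq_maxels_rawp, key_comm]
  · -- associativity
    set P := sp α with hP
    set Q := sp β with hQ
    set S := sp γ with hS
    have hsp1 : sp (xprod α β) = P ∪ Q := by
      rw [xprod_eq_maxels_rawp, sp_maxels, sp_rawp hαne hβne]
    have hsp2 : sp (xprod β γ) = Q ∪ S := by
      rw [xprod_eq_maxels_rawp, sp_maxels, sp_rawp hβne hγne]
    -- the two "flattened" raw products
    have lhs_eq : xprod (xprod α β) γ =
        maxels (((rawp α β) ×ˢ γ).image fun p => (p.1 \ S) ∪ (p.2 \ (P ∪ Q)) ∪ (p.1 ∩ p.2)) := by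
      show maxels _ = _
      rw [hsp1]
      apply maxels_eq
      · intro s hs
        simp only [Finset.mem_image, Finset.mem_product] at hs
        obtain ⟨⟨D, C⟩, ⟨hD, hC⟩, rfl⟩ := hs
        refine ⟨_, Finset.mem_image.2 ⟨(D, C), Finset.mem_product.2
          ⟨maxels_subset _ (by exact hD), hC⟩, rfl⟩, ?_⟩
        rfl
      · intro t ht
        simp only [Finset.mem_image, Finset.mem_product] at ht
        obtain ⟨⟨D, C⟩, ⟨hD, hC⟩, rfl⟩ := ht
        obtain ⟨D', hD', hDD'⟩ := exists_maximal_sup hD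
        refine ⟨_, Finset.mem_image.2 ⟨(D', C), Finset.mem_product.2 ⟨by exact hD', hC⟩, rfl⟩, ?_⟩
        intro x hx
        simp only [Finset.mem_union, Finset.mem_sdiff, Finset.mem_inter] at hx ⊢
        have := @hDD' x
        tauto
    have rhs_eq : xprod α (xprod β γ) =
        maxels ((α ×ˢ (rawp β γ)).image fun p => (p.1 \ (Q ∪ S)) ∪ (p.2 \ P) ∪ (p.1 ∩ p.2)) := by
      show maxels _ = _
      rw [hsp2]
      apply maxels_eq
      · intro s hs
        simp only [Finset.mem_image, Finset.mem_product] at hs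
        obtain ⟨⟨A, E⟩, ⟨hA, hE⟩, rfl⟩ := hs
        exact ⟨_, Finset.mem_image.2 ⟨(A, E), Finset.mem_product.2
          ⟨hA, maxels_subset _ (by exact hE)⟩, rfl⟩, by rfl⟩
      · intro t ht
        simp only [Finset.mem_image, Finset.mem_product] at ht
        obtain ⟨⟨A, E⟩, ⟨hA, hE⟩, rfl⟩ := ht
        obtain ⟨E', hE', hEE'⟩ := exists_maximal_sup hE
        refine ⟨_, Finset.mem_image.2 ⟨(A, E'), Finset.mem_product.2 ⟨hA, by exact hE'⟩, rfl⟩, ?_⟩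
        intro x hx
        simp only [Finset.mem_union, Finset.mem_sdiff, Finset.mem_inter] at hx ⊢
        have := @hEE' x
        tauto
    rw [lhs_eq, rhs_eq]
    congr 1
    apply Finset.Subset.antisymm <;> intro D hD <;>
      simp only [Finset.mem_image, Finset.mem_product] at hD ⊢
    · obtain ⟨⟨D', C⟩, ⟨hD', hC⟩, rfl⟩ := hD
      simp only [rawp, Finset.mem_image, Finset.mem_product] at hD'
      obtain ⟨⟨A, B⟩, ⟨hA, hB⟩, rfl⟩ := hD'
      refine ⟨(A, (B \ S) ∪ (C \ Q) ∪ (B ∩ C)), ⟨hA, ?_⟩, ?_⟩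
      · exact Finset.mem_image.2 ⟨(B, C), Finset.mem_product.2 ⟨hB, hC⟩, rfl⟩
      · exact (core_assoc (subset_sp hA) (subset_sp hB) (subset_sp hC)).symm
    · obtain ⟨⟨A, E⟩, ⟨hA, hE⟩, rfl⟩ := hD
      simp only [rawp, Finset.mem_image, Finset.mem_product] at hE
      obtain ⟨⟨B, C⟩, ⟨hB, hC⟩, rfl⟩ := hE
      refine ⟨((A \ Q) ∪ (B \ P) ∪ (A ∩ B), C), ⟨?_, hC⟩, ?_⟩
      · exact Finset.mem_image.2 ⟨(A, B), Finset.mem_product.2 ⟨hA, hB⟩, rfl⟩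
      · exact core_assoc (subset_sp hA) (subset_sp hB) (subset_sp hC)
  · -- neutral element
    have hsp0 : sp ({(∅ : Finset ℕ)} : Fam) = ∅ := by simp [sp]
    have himg : rawp α ({(∅ : Finset ℕ)} : Fam) = α := by
      apply Finset.Subset.antisymm
      · intro D hD
        simp only [rawp, Finset.mem_image, Finset.mem_product, hsp0,
          Finset.mem_singleton] at hD
        obtain ⟨⟨A, B⟩, ⟨hA, rfl⟩, rfl⟩ := hD
        simpa using hA
      · intro D hD
        exact Finset.mem_image.2 ⟨(D, ∅), Finset.mem_product.2 ⟨hD, Finset.mem_singleton_self _⟩,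
          by simp [hsp0]⟩
    rw [xprod_eq_maxels_rawp, himg, maxels, Finset.filter_true_of_mem]
    intro A hA B hB hAB
    exact hα.2 A hA B hB hAB
  · simp [xprod, maxels]
end

section
/- If γ ≤ α × β for antichains α, β, γ, then π_{sp(α)}(γ) ≤ α. -/
open Finset

/-- if `γ ≤ α × β` then `π_{sp α}(γ) ≤ α`. -/
theorem proj_le_of_le_xprod (N : Finset ℕ) (α β γ : Fam)
    (hα : IsAC N α) (hβ : IsAC N β) (hγ : IsAC N γ)
    (h : amle γ (xprod α β)) :
    amle (proj (sp α) γ) α := by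
  intro X hX
  have hX' : X ∈ γ.image (· ∩ sp α) := Finset.mem_of_mem_filter _ hX
  obtain ⟨C, hC, rfl⟩ := Finset.mem_image.mp hX'
  obtain ⟨D, hD, hCD⟩ := h C hC
  have hD' := Finset.mem_of_mem_filter _ hD
  obtain ⟨p, hp, rfl⟩ := Finset.mem_image.mp hD'
  refine ⟨p.1, (Finset.mem_product.mp hp).1, ?_⟩
  intro x hx
  have hx1 : x ∈ C := (Finset.mem_inter.mp hx).1
  have hx2 : x ∈ sp α := (Finset.mem_inter.mp hx).2
  have := hCD hx1
  simp only [Finset.mem_union, Finset.mem_sdiff, Finset.mem_inter] at this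
  rcases this with (h1 | h2) | h3
  · exact h1.1
  · exact absurd hx2 h2.2
  · exact h3.1
end

section
/- Orthogonal coordinate system theorem: let σ be a partition of a finite set N into nonempty disjoint blocks. Then the intervals [⋁_{S∈σ} κ_S, ⨉_{S∈σ} κ_S], ranging over all families (κ_S)_{S∈σ} where κ_S is an antichain of subsets of S with span S, form a partition of the set Υ_N of antichains of subsets of N with span N. -/
open Finset

namespace OCS

def IsAnti (α : Fam) : Prop := ∀ A ∈ α, ∀ B ∈ α, A ⊆ B → A = B

lemma mem_maxels {S : Fam} {A : Finset ℕ} :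
    A ∈ maxels S ↔ A ∈ S ∧ ∀ B ∈ S, A ⊆ B → A = B := by
  simp [maxels, Finset.mem_filter]

lemma maxels_subset {S : Fam} : maxels S ⊆ S := Finset.filter_subset _ _

lemma isAnti_maxels (S : Fam) : IsAnti (maxels S) := fun A hA B hB hAB =>
  (mem_maxels.1 hA).2 B (maxels_subset hB) hAB

lemma exists_maxels_above {S : Fam} {A : Finset ℕ} (hA : A ∈ S) :
    ∃ B ∈ maxels S, A ⊆ B := by
  obtain ⟨B, hB, hmax⟩ : ∃ B ∈ S.filter (A ⊆ ·), ∀ x ∈ S.filter (A ⊆ ·), ¬ B < x := by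
    obtain ⟨B, hBm⟩ := Finset.exists_maximal (s := S.filter (A ⊆ ·)) ⟨A, by simp [hA]⟩
    exact ⟨B, hBm.1, fun x hx hlt => hlt.not_ge (hBm.2 hx hlt.le)⟩
  rw [Finset.mem_filter] at hB
  refine ⟨B, mem_maxels.2 ⟨hB.1, ?_⟩, hB.2⟩
  intro C hC hBC
  by_contra hneq
  exact hmax C (Finset.mem_filter.2 ⟨hC, hB.2.trans hBC⟩) (lt_of_le_of_ne hBC hneq)

lemma mem_sp {α : Fam} {n : ℕ} : n ∈ sp α ↔ ∃ A ∈ α, n ∈ A := by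
  simp [sp, Finset.mem_sup]

lemma subset_sp {α : Fam} {A : Finset ℕ} (h : A ∈ α) : A ⊆ sp α :=
  Finset.le_sup (f := id) h

lemma amle_refl (α : Fam) : amle α α := fun A hA => ⟨A, hA, Finset.Subset.refl A⟩

lemma amle_antisymm_sub {α β : Fam} (hα : IsAnti α)
    (h1 : amle α β) (h2 : amle β α) : α ⊆ β := by
  intro A hA
  obtain ⟨B, hB, hAB⟩ := h1 A hA
  obtain ⟨A', hA', hBA'⟩ := h2 B hB
  have hAA' : A = A' := hα A hA A' hA' (hAB.trans hBA')
  have : A = B := Finset.Subset.antisymm hAB (hAA' ▸ hBA')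
  exact this ▸ hB

lemma amle_antisymm {α β : Fam} (hα : IsAnti α) (hβ : IsAnti β)
    (h1 : amle α β) (h2 : amle β α) : α = β :=
  Finset.Subset.antisymm (amle_antisymm_sub hα h1 h2) (amle_antisymm_sub hβ h2 h1)

lemma mem_foldr_union {l : List (Finset ℕ)} {n : ℕ} :
    n ∈ l.foldr (· ∪ ·) ∅ ↔ ∃ s ∈ l, n ∈ s := by
  induction l with
  | nil => simp
  | cons a t ih => simp [ih]

lemma disjoint_foldr_union {s : Finset ℕ} {l : List (Finset ℕ)}
    (h : ∀ x ∈ l, Disjoint s x) : Disjoint s (l.foldr (· ∪ ·) ∅) := by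
  rw [Finset.disjoint_left]
  intro n hns hnl
  obtain ⟨x, hx, hnx⟩ := mem_foldr_union.1 hnl
  exact (Finset.disjoint_left.1 (h x hx)) hns hnx

lemma union_parts {α β : Fam} (hd : Disjoint (sp α) (sp β))
    {A B A' B' : Finset ℕ} (hA : A ∈ α) (hB : B ∈ β) (hA' : A' ∈ α) (hB' : B' ∈ β)
    (h : A ∪ B ⊆ A' ∪ B') : A ⊆ A' ∧ B ⊆ B' := by
  constructor
  · intro a ha
    rcases Finset.mem_union.1 (h (Finset.mem_union_left _ ha)) with h1 | h1
    · exact h1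
    · exact (Finset.disjoint_left.1 hd (subset_sp hA ha) (subset_sp hB' h1)).elim
  · intro b hb
    rcases Finset.mem_union.1 (h (Finset.mem_union_right _ hb)) with h1 | h1
    · exact (Finset.disjoint_right.1 hd (subset_sp hB hb) (subset_sp hA' h1)).elim
    · exact h1

lemma xprod_eq {α β : Fam} (hα : IsAnti α) (hβ : IsAnti β) (hd : Disjoint (sp α) (sp β)) :
    xprod α β = (α ×ˢ β).image fun p => p.1 ∪ p.2 := by
  have himg : ((α ×ˢ β).image fun p => (p.1 \ sp β) ∪ (p.2 \ sp α) ∪ (p.1 ∩ p.2))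
      = (α ×ˢ β).image fun p => p.1 ∪ p.2 := by
    apply Finset.image_congr
    intro p hp
    simp only [Finset.mem_coe, Finset.mem_product] at hp
    have h1 : p.1 \ sp β = p.1 := Finset.sdiff_eq_self_iff_disjoint.2
      (Finset.disjoint_of_subset_left (subset_sp hp.1) hd)
    have h2 : p.2 \ sp α = p.2 := Finset.sdiff_eq_self_iff_disjoint.2
      (Finset.disjoint_of_subset_left (subset_sp hp.2) hd.symm)
    simp only []
    rw [h1, h2]
    exact Finset.union_eq_left.2 Finset.inter_subset_union
  rw [xprod, himg]
  apply Finset.filter_true_of_mem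
  intro X hX C hC hXC
  simp only [Finset.mem_image, Finset.mem_product] at hX hC
  obtain ⟨⟨A, B⟩, ⟨hA, hB⟩, rfl⟩ := hX
  obtain ⟨⟨A', B'⟩, ⟨hA', hB'⟩, rfl⟩ := hC
  obtain ⟨u1, u2⟩ := union_parts hd hA hB hA' hB' hXC
  rw [hα A hA A' hA' u1, hβ B hB B' hB' u2]

lemma foldX_facts (ls : List Fam)
    (hA : ∀ α ∈ ls, IsAnti α) (hne : ∀ α ∈ ls, α.Nonempty)
    (hd : ls.Pairwise fun α β => Disjoint (sp α) (sp β)) :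
    (ls.foldr xprod {∅}).Nonempty ∧
    IsAnti (ls.foldr xprod {∅}) ∧
    sp (ls.foldr xprod {∅}) = (ls.map sp).foldr (· ∪ ·) ∅ ∧
    (∀ X ∈ ls.foldr xprod {∅}, ∀ α ∈ ls, X ∩ sp α ∈ α) ∧
    (∀ C : Finset ℕ, C ⊆ (ls.map sp).foldr (· ∪ ·) ∅ →
      (∀ α ∈ ls, ∃ D ∈ α, C ∩ sp α ⊆ D) → ∃ X ∈ ls.foldr xprod {∅}, C ⊆ X) := by
  induction ls with
  | nil =>
    refine ⟨⟨∅, by simp⟩, ?_, ?_, by simp, ?_⟩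
    · intro A hA' B hB' _
      simp only [List.foldr_nil, Finset.mem_singleton] at hA' hB'
      rw [hA', hB']
    · simp [sp]
    · intro C hC _
      refine ⟨∅, by simp, ?_⟩
      simpa using hC
  | cons α t ih =>
    obtain ⟨hhead, htail⟩ := List.pairwise_cons.1 hd
    obtain ⟨Qne, Qanti, Qsp, Qinter, Qcover⟩ :=
      ih (fun β hβ => hA β (List.mem_cons_of_mem _ hβ))
        (fun β hβ => hne β (List.mem_cons_of_mem _ hβ)) htail
    set Q := t.foldr xprod {(∅ : Finset ℕ)} with hQ
    have hαanti : IsAnti α := hA α (List.mem_cons_self)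
    have hαne : α.Nonempty := hne α (List.mem_cons_self)
    have hdQ : Disjoint (sp α) (sp Q) := by
      rw [Qsp]
      apply disjoint_foldr_union
      intro x hx
      obtain ⟨β, hβ, rfl⟩ := List.mem_map.1 hx
      exact hhead β hβ
    have hP : (α :: t).foldr xprod {(∅ : Finset ℕ)} = (α ×ˢ Q).image fun p => p.1 ∪ p.2 := by
      rw [List.foldr_cons, ← hQ, xprod_eq hαanti Qanti hdQ]
    have memP : ∀ {X : Finset ℕ}, X ∈ (α :: t).foldr xprod {(∅ : Finset ℕ)} ↔
        ∃ A ∈ α, ∃ Y ∈ Q, X = A ∪ Y := by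
      intro X
      rw [hP]
      simp only [Finset.mem_image, Finset.mem_product]
      constructor
      · rintro ⟨⟨A, Y⟩, ⟨h1, h2⟩, rfl⟩; exact ⟨A, h1, Y, h2, rfl⟩
      · rintro ⟨A, h1, Y, h2, rfl⟩; exact ⟨⟨A, Y⟩, ⟨h1, h2⟩, rfl⟩
    have hYα : ∀ {Y : Finset ℕ}, Y ∈ Q → Y ∩ sp α = ∅ := by
      intro Y hY
      rw [← Finset.disjoint_iff_inter_eq_empty]
      exact (Finset.disjoint_of_subset_right (subset_sp hY) hdQ).symm
    refine ⟨?_, ?_, ?_, ?_, ?_⟩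
    · obtain ⟨A, hA'⟩ := hαne
      obtain ⟨Y, hY⟩ := Qne
      exact ⟨A ∪ Y, memP.2 ⟨A, hA', Y, hY, rfl⟩⟩
    · intro X hX X' hX' hXX'
      obtain ⟨A, h1, Y, h2, rfl⟩ := memP.1 hX
      obtain ⟨A', h1', Y', h2', rfl⟩ := memP.1 hX'
      obtain ⟨u1, u2⟩ := union_parts hdQ h1 h2 h1' h2' hXX'
      rw [hαanti A h1 A' h1' u1, Qanti Y h2 Y' h2' u2]
    · ext n
      simp only [List.map_cons, List.foldr_cons, Finset.mem_union]
      constructor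
      · intro hn
        obtain ⟨X, hX, hnX⟩ := mem_sp.1 hn
        obtain ⟨A, h1, Y, h2, rfl⟩ := memP.1 hX
        rcases Finset.mem_union.1 hnX with h | h
        · exact Or.inl (subset_sp h1 h)
        · exact Or.inr (Qsp ▸ subset_sp h2 h)
      · intro hn
        rcases hn with h | h
        · obtain ⟨A, hA', hnA⟩ := mem_sp.1 h
          obtain ⟨Y, hY⟩ := Qne
          exact mem_sp.2 ⟨A ∪ Y, memP.2 ⟨A, hA', Y, hY, rfl⟩, Finset.mem_union_left _ hnA⟩
        · obtain ⟨Y, hY, hnY⟩ := mem_sp.1 (Qsp ▸ h : n ∈ sp Q)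
          obtain ⟨A, hA'⟩ := hαne
          exact mem_sp.2 ⟨A ∪ Y, memP.2 ⟨A, hA', Y, hY, rfl⟩, Finset.mem_union_right _ hnY⟩
    · intro X hX β hβ
      obtain ⟨A, h1, Y, h2, rfl⟩ := memP.1 hX
      rcases List.mem_cons.1 hβ with rfl | hβt
      · rw [Finset.union_inter_distrib_right, hYα h2,
          Finset.inter_eq_left.2 (subset_sp h1), Finset.union_empty]
        exact h1
      · have hAβ : A ∩ sp β = ∅ := by
          rw [← Finset.disjoint_iff_inter_eq_empty]
          exact Finset.disjoint_of_subset_left (subset_sp h1) (hhead β hβt)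
        rw [Finset.union_inter_distrib_right, hAβ, Finset.empty_union]
        exact Qinter Y h2 β hβt
    · intro C hC hsel
      obtain ⟨D, hD, hCD⟩ := hsel α (List.mem_cons_self)
      have hC' : C \ sp α ⊆ (t.map sp).foldr (· ∪ ·) ∅ := by
        intro n hn
        rw [Finset.mem_sdiff] at hn
        have := hC hn.1
        simp only [List.map_cons, List.foldr_cons, Finset.mem_union] at this
        rcases this with h | h
        · exact absurd h hn.2
        · exact h
      obtain ⟨Y, hY, hCY⟩ := Qcover (C \ sp α) hC' (by
        intro β hβ
        obtain ⟨D', hD', hCD'⟩ := hsel β (List.mem_cons_of_mem _ hβ)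
        exact ⟨D', hD', fun n hn => hCD' (by
          rw [Finset.mem_inter] at hn ⊢
          exact ⟨(Finset.mem_sdiff.1 hn.1).1, hn.2⟩)⟩)
      refine ⟨D ∪ Y, memP.2 ⟨D, hD, Y, hY, rfl⟩, ?_⟩
      intro n hn
      by_cases hna : n ∈ sp α
      · exact Finset.mem_union_left _ (hCD (Finset.mem_inter.2 ⟨hn, hna⟩))
      · exact Finset.mem_union_right _ (hCY (Finset.mem_sdiff.2 ⟨hn, hna⟩))



lemma sp_subset {α : Fam} {M : Finset ℕ} (h : ∀ A ∈ α, A ⊆ M) : sp α ⊆ M := by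
  intro n hn
  obtain ⟨A, hA, hnA⟩ := mem_sp.1 hn
  exact h A hA hnA

section Main

variable {N : Finset ℕ} {σ : Fam} {κf : Finset ℕ → Fam}

/-- hypotheses on the partition -/
def PartHyp (N : Finset ℕ) (σ : Fam) : Prop :=
  (∀ S ∈ σ, S.Nonempty) ∧ (∀ S ∈ σ, ∀ T ∈ σ, S ≠ T → Disjoint S T) ∧ σ.sup id = N

/-- hypotheses on the coordinate family -/
def CoordHyp (σ : Fam) (κf : Finset ℕ → Fam) : Prop :=
  ∀ S ∈ σ, IsAC S (κf S) ∧ sp (κf S) = S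

lemma S_subset_N (hp : PartHyp N σ) {S : Finset ℕ} (hS : S ∈ σ) : S ⊆ N := by
  rw [← hp.2.2]; exact Finset.le_sup (f := id) hS

lemma mem_N_iff (hp : PartHyp N σ) {n : ℕ} : n ∈ N ↔ ∃ S ∈ σ, n ∈ S := by
  rw [← hp.2.2]; exact Finset.mem_sup

lemma kf_nonempty (hκ : CoordHyp σ κf) (hp : PartHyp N σ) {S : Finset ℕ} (hS : S ∈ σ) :
    (κf S).Nonempty := by
  obtain ⟨n, hn⟩ := hp.1 S hS
  rw [← (hκ S hS).2] at hn
  obtain ⟨A, hA, _⟩ := mem_sp.1 hn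
  exact ⟨A, hA⟩

lemma kf_mem_nonempty (hκ : CoordHyp σ κf) (hp : PartHyp N σ) {S : Finset ℕ} (hS : S ∈ σ)
    {B : Finset ℕ} (hB : B ∈ κf S) : B.Nonempty := by
  rw [Finset.nonempty_iff_ne_empty]
  rintro rfl
  have hanti := (hκ S hS).1.2
  obtain ⟨n, hn⟩ := hp.1 S hS
  rw [← (hκ S hS).2] at hn
  obtain ⟨A, hA, hnA⟩ := mem_sp.1 hn
  have := hanti ∅ hB A hA (Finset.empty_subset A)
  rw [← this] at hnA
  exact absurd hnA (Finset.notMem_empty n)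

lemma ls_anti (hκ : CoordHyp σ κf) : ∀ α ∈ σ.toList.map κf, IsAnti α := by
  intro α hα
  obtain ⟨S, hS, rfl⟩ := List.mem_map.1 hα
  exact (hκ S (Finset.mem_toList.1 hS)).1.2

lemma ls_ne (hκ : CoordHyp σ κf) (hp : PartHyp N σ) : ∀ α ∈ σ.toList.map κf, α.Nonempty := by
  intro α hα
  obtain ⟨S, hS, rfl⟩ := List.mem_map.1 hα
  exact kf_nonempty hκ hp (Finset.mem_toList.1 hS)

lemma ls_pairwise (hκ : CoordHyp σ κf) (hp : PartHyp N σ) :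
    (σ.toList.map κf).Pairwise fun α β => Disjoint (sp α) (sp β) := by
  rw [List.pairwise_map]
  refine List.Pairwise.imp_of_mem ?_ σ.nodup_toList
  intro S T hS hT hST
  rw [(hκ S (Finset.mem_toList.1 hS)).2, (hκ T (Finset.mem_toList.1 hT)).2]
  exact hp.2.1 S (Finset.mem_toList.1 hS) T (Finset.mem_toList.1 hT) hST

lemma ls_foldsp (hκ : CoordHyp σ κf) (hp : PartHyp N σ) :
    ((σ.toList.map κf).map sp).foldr (· ∪ ·) ∅ = N := by
  ext n
  rw [mem_foldr_union, mem_N_iff hp]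
  constructor
  · rintro ⟨s, hs, hns⟩
    obtain ⟨α, hα, rfl⟩ := List.mem_map.1 hs
    obtain ⟨S, hS, rfl⟩ := List.mem_map.1 hα
    exact ⟨S, Finset.mem_toList.1 hS, (hκ S (Finset.mem_toList.1 hS)).2 ▸ hns⟩
  · rintro ⟨S, hS, hnS⟩
    exact ⟨sp (κf S), List.mem_map.2 ⟨κf S, List.mem_map.2 ⟨S, Finset.mem_toList.2 hS, rfl⟩, rfl⟩,
      (hκ S hS).2.symm ▸ hnS⟩

lemma bigX_facts (hκ : CoordHyp σ κf) (hp : PartHyp N σ) :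
    (bigX σ κf).Nonempty ∧ IsAnti (bigX σ κf) ∧
    (∀ X ∈ bigX σ κf, ∀ S ∈ σ, X ∩ S ∈ κf S) ∧
    (∀ C : Finset ℕ, C ⊆ N → (∀ S ∈ σ, ∃ D ∈ κf S, C ∩ S ⊆ D) →
      ∃ X ∈ bigX σ κf, C ⊆ X) := by
  obtain ⟨h1, h2, _, h4, h5⟩ :=
    foldX_facts (σ.toList.map κf) (ls_anti hκ) (ls_ne hκ hp) (ls_pairwise hκ hp)
  refine ⟨h1, h2, ?_, ?_⟩
  · intro X hX S hS
    have := h4 X hX (κf S) (List.mem_map.2 ⟨S, Finset.mem_toList.2 hS, rfl⟩)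
    rwa [(hκ S hS).2] at this
  · intro C hC hsel
    refine h5 C (by rwa [ls_foldsp hκ hp]) ?_
    intro α hα
    obtain ⟨S, hS, rfl⟩ := List.mem_map.1 hα
    obtain ⟨D, hD, hCD⟩ := hsel S (Finset.mem_toList.1 hS)
    exact ⟨D, hD, (hκ S (Finset.mem_toList.1 hS)).2.symm ▸ hCD⟩

lemma bigJoin_isAC (hκ : CoordHyp σ κf) (hp : PartHyp N σ) : IsAC N (bigJoin σ κf) := by
  constructor
  · intro A hA
    obtain ⟨S, hS, hAS⟩ := Finset.mem_sup.1 (maxels_subset hA)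
    exact ((hκ S hS).1.1 A hAS).trans (S_subset_N hp hS)
  · exact isAnti_maxels _

lemma amle_bigJoin_bigX (hκ : CoordHyp σ κf) (hp : PartHyp N σ) :
    amle (bigJoin σ κf) (bigX σ κf) := by
  intro B hB
  obtain ⟨S, hS, hBS⟩ := Finset.mem_sup.1 (maxels_subset hB)
  obtain ⟨-, -, -, hcover⟩ := bigX_facts hκ hp
  refine hcover B (((hκ S hS).1.1 B hBS).trans (S_subset_N hp hS)) ?_
  intro T hT
  by_cases hTS : T = S
  · subst hTS
    exact ⟨B, hBS, Finset.inter_subset_left⟩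
  · obtain ⟨D, hD⟩ := kf_nonempty hκ hp hT
    refine ⟨D, hD, ?_⟩
    intro n hn
    rw [Finset.mem_inter] at hn
    exact absurd ((hκ S hS).1.1 B hBS hn.1)
      (Finset.disjoint_left.1 (hp.2.1 T hT S hS hTS) hn.2)

/-- every member of `σ.sup κf` lies below some member of the big join which lies below γ -/
lemma sup_below_gamma {γ : Fam} (hγle : amle (bigJoin σ κf) γ)
    {A : Finset ℕ} (hA : A ∈ σ.sup κf) : ∃ C ∈ γ, A ⊆ C := by
  obtain ⟨B, hB, hAB⟩ := exists_maxels_above hA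
  obtain ⟨C, hC, hBC⟩ := hγle B hB
  exact ⟨C, hC, hAB.trans hBC⟩

lemma sp_gamma (hκ : CoordHyp σ κf) (hp : PartHyp N σ) {γ : Fam} (hγ : IsAC N γ)
    (hγle : amle (bigJoin σ κf) γ) : sp γ = N := by
  apply Finset.Subset.antisymm
  · exact sp_subset hγ.1
  · intro n hn
    obtain ⟨S, hS, hnS⟩ := (mem_N_iff hp).1 hn
    rw [← (hκ S hS).2] at hnS
    obtain ⟨A, hA, hnA⟩ := mem_sp.1 hnS
    obtain ⟨C, hC, hAC⟩ := sup_below_gamma hγle (Finset.mem_sup.2 ⟨S, hS, hA⟩)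
    exact mem_sp.2 ⟨C, hC, hAC hnA⟩

/-- member of κf S are maximal in σ.sup κf -/
lemma kf_mem_bigJoin (hκ : CoordHyp σ κf) (hp : PartHyp N σ) {S : Finset ℕ} (hS : S ∈ σ)
    {B : Finset ℕ} (hB : B ∈ κf S) : B ∈ bigJoin σ κf := by
  refine mem_maxels.2 ⟨Finset.mem_sup.2 ⟨S, hS, hB⟩, ?_⟩
  intro B' hB' hBB'
  obtain ⟨T, hT, hB'T⟩ := Finset.mem_sup.1 hB'
  by_cases hTS : T = S
  · subst hTS
    exact (hκ T hT).1.2 B hB B' hB'T hBB'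
  · obtain ⟨n, hn⟩ := kf_mem_nonempty hκ hp hS hB
    exact absurd ((hκ S hS).1.1 B hB hn)
      (Finset.disjoint_left.1 (hp.2.1 T hT S hS hTS) ((hκ T hT).1.1 B' hB'T (hBB' hn)))

/-- the key uniqueness lemma: γ in the interval determines the coordinates -/
lemma proj_eq_kf (hκ : CoordHyp σ κf) (hp : PartHyp N σ) {γ : Fam} (hγ : IsAC N γ)
    (h1 : amle (bigJoin σ κf) γ) (h2 : amle γ (bigX σ κf))
    {S : Finset ℕ} (hS : S ∈ σ) : proj S γ = κf S := by
  obtain ⟨-, -, hinter, -⟩ := bigX_facts hκ hp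
  apply amle_antisymm (isAnti_maxels _) (hκ S hS).1.2
  · -- proj S γ ≤ κf S
    intro E hE
    obtain ⟨A, hA, rfl⟩ := Finset.mem_image.1 (maxels_subset hE)
    obtain ⟨X, hX, hAX⟩ := h2 A hA
    refine ⟨X ∩ S, hinter X hX S hS, ?_⟩
    exact Finset.inter_subset_inter hAX (Finset.Subset.refl S)
  · -- κf S ≤ proj S γ
    intro B hB
    obtain ⟨C, hC, hBC⟩ := h1 B (kf_mem_bigJoin hκ hp hS hB)
    have hCS : C ∩ S ∈ γ.image (· ∩ S) := Finset.mem_image.2 ⟨C, hC, rfl⟩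
    obtain ⟨D, hD, hCD⟩ := exists_maxels_above hCS
    refine ⟨D, hD, ?_⟩
    intro n hn
    exact hCD (Finset.mem_inter.2 ⟨hBC hn, (hκ S hS).1.1 B hB hn⟩)

/-- existence: γ antichain with span N lies in the interval of its projections -/
lemma gamma_in_interval (hp : PartHyp N σ) {γ : Fam} (hγ : IsAC N γ) (hsp : sp γ = N) :
    CoordHyp σ (fun S => proj S γ) ∧
    amle (bigJoin σ (fun S => proj S γ)) γ ∧
    amle γ (bigX σ (fun S => proj S γ)) := by
  have hcoord : CoordHyp σ (fun S => proj S γ) := by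
    intro S hS
    refine ⟨⟨?_, isAnti_maxels _⟩, ?_⟩
    · intro A hA
      obtain ⟨B, _, rfl⟩ := Finset.mem_image.1 (maxels_subset hA)
      exact Finset.inter_subset_right
    · apply Finset.Subset.antisymm
      · refine sp_subset ?_
        intro A hA
        obtain ⟨B, _, rfl⟩ := Finset.mem_image.1 (maxels_subset hA)
        exact Finset.inter_subset_right
      · intro n hnS
        have hnN : n ∈ N := S_subset_N hp hS hnS
        rw [← hsp] at hnN
        obtain ⟨A, hA, hnA⟩ := mem_sp.1 hnN
        have : A ∩ S ∈ γ.image (· ∩ S) := Finset.mem_image.2 ⟨A, hA, rfl⟩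
        obtain ⟨D, hD, hsub⟩ := exists_maxels_above this
        exact subset_sp hD (hsub (Finset.mem_inter.2 ⟨hnA, hnS⟩))
  refine ⟨hcoord, ?_, ?_⟩
  · intro B hB
    obtain ⟨S, hS, hBS⟩ := Finset.mem_sup.1 (maxels_subset hB)
    obtain ⟨A, hA, rfl⟩ := Finset.mem_image.1 (maxels_subset hBS)
    exact ⟨A, hA, Finset.inter_subset_left⟩
  · obtain ⟨-, -, -, hcover⟩ := bigX_facts hcoord hp
    intro C hC
    refine hcover C (hγ.1 C hC) ?_
    intro S hS
    have : C ∩ S ∈ γ.image (· ∩ S) := Finset.mem_image.2 ⟨C, hC, rfl⟩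
    obtain ⟨D, hD, hsub⟩ := exists_maxels_above this
    exact ⟨D, hD, hsub⟩

end Main
end OCS

/-- orthogonal coordinate system theorem, for a partition `σ` of `N`. -/
theorem orthogonal_coordinate_system (N : Finset ℕ) (σ : Fam)
    (hne : ∀ S ∈ σ, S.Nonempty)
    (hdisj : ∀ S ∈ σ, ∀ T ∈ σ, S ≠ T → Disjoint S T)
    (hcover : σ.sup id = N) :
    (∀ κf : Finset ℕ → Fam,
      (∀ S ∈ σ, IsAC S (κf S) ∧ sp (κf S) = S) →
      (intervalSet N (bigJoin σ κf) (bigX σ κf)).Nonempty) ∧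
    (∀ κ₁ κ₂ : Finset ℕ → Fam,
      (∀ S ∈ σ, IsAC S (κ₁ S) ∧ sp (κ₁ S) = S) →
      (∀ S ∈ σ, IsAC S (κ₂ S) ∧ sp (κ₂ S) = S) →
      (∃ γ : Fam, γ ∈ intervalSet N (bigJoin σ κ₁) (bigX σ κ₁) ∧
        γ ∈ intervalSet N (bigJoin σ κ₂) (bigX σ κ₂)) →
      ∀ S ∈ σ, κ₁ S = κ₂ S) ∧
    (∀ γ : Fam, (IsAC N γ ∧ sp γ = N) ↔
      ∃ κf : Finset ℕ → Fam, (∀ S ∈ σ, IsAC S (κf S) ∧ sp (κf S) = S) ∧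
        γ ∈ intervalSet N (bigJoin σ κf) (bigX σ κf)) := by
  have hp : OCS.PartHyp N σ := ⟨hne, hdisj, hcover⟩
  refine ⟨?_, ?_, ?_⟩
  · intro κf hκ
    exact ⟨bigJoin σ κf, OCS.bigJoin_isAC hκ hp, OCS.amle_refl _, OCS.amle_bigJoin_bigX hκ hp⟩
  · rintro κ₁ κ₂ h1 h2 ⟨γ, ⟨hγ1, hle1, hle1'⟩, ⟨hγ2, hle2, hle2'⟩⟩ S hS
    rw [← OCS.proj_eq_kf h1 hp hγ1 hle1 hle1' hS, OCS.proj_eq_kf h2 hp hγ2 hle2 hle2' hS]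
  · intro γ
    constructor
    · rintro ⟨hγ, hsp⟩
      obtain ⟨hc, hj, hx⟩ := OCS.gamma_in_interval hp hγ hsp
      exact ⟨fun S => proj S γ, hc, hγ, hj, hx⟩
    · rintro ⟨κf, hκ, hγ, hj, hx⟩
      exact ⟨hγ, OCS.sp_gamma hκ hp hγ hj⟩
end

section
/- If S₁, S₂ are non-disjoint sets and κ₁, κ₂ are antichains with spans S₁, S₂ such that π_{S₁∩S₂}(κ₁) ≠ π_{S₁∩S₂}(κ₂), then κ₁ ∨ κ₂ ≰ κ₁ × κ₂, i.e., the interval [κ₁ ∨ κ₂, κ₁ × κ₂] is empty. -/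
open Finset

lemma exists_max_above (S : Fam) {A : Finset ℕ} (hA : A ∈ S) :
    ∃ M ∈ maxels S, A ⊆ M := by
  obtain ⟨m, hm, hmax'⟩ := Finset.exists_maximal (s := S.filter (A ⊆ ·)) ⟨A, by simp [hA]⟩
  have hmax : ∀ x' ∈ S.filter (A ⊆ ·), ¬ m < x' := fun x' hx' hlt => hlt.2 (hmax' hx' hlt.1)
  simp only [Finset.mem_filter] at hm
  refine ⟨m, ?_, hm.2⟩
  simp only [maxels, Finset.mem_filter]
  refine ⟨hm.1, fun B hB hsub => ?_⟩
  by_contra hne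
  exact hmax B (Finset.mem_filter.2 ⟨hB, hm.2.trans hsub⟩) (lt_of_le_of_ne hsub hne)

lemma maxels_subset_of_cofinal (X Y : Fam) (hXY : ∀ x ∈ X, ∃ y ∈ Y, x ⊆ y)
    (hYX : ∀ y ∈ Y, ∃ x ∈ X, y ⊆ x) : maxels X ⊆ maxels Y := by
  intro x hx
  simp only [maxels, Finset.mem_filter] at hx ⊢
  obtain ⟨hxX, hxmax⟩ := hx
  obtain ⟨y, hyY, hxy⟩ := hXY x hxX
  obtain ⟨x', hx'X, hyx'⟩ := hYX y hyY
  have hxx' : x = x' := hxmax x' hx'X (hxy.trans hyx')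
  have hxy' : x = y := Finset.Subset.antisymm hxy (hxx' ▸ hyx')
  subst hxy'
  refine ⟨hyY, fun y' hy' hsub => ?_⟩
  obtain ⟨x'', hx'', hy'x''⟩ := hYX y' hy'
  have := hxmax x'' hx'' (hsub.trans hy'x'')
  exact Finset.Subset.antisymm hsub (this ▸ hy'x'')

lemma maxels_eq_of_cofinal (X Y : Fam) (hXY : ∀ x ∈ X, ∃ y ∈ Y, x ⊆ y)
    (hYX : ∀ y ∈ Y, ∃ x ∈ X, y ⊆ x) : maxels X = maxels Y :=
  Finset.Subset.antisymm (maxels_subset_of_cofinal X Y hXY hYX)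
    (maxels_subset_of_cofinal Y X hYX hXY)

/-- interaction on overlapping spans makes the interval empty. -/
theorem overlapping_span_empty_interval (S₁ S₂ : Finset ℕ)
    (hinter : (S₁ ∩ S₂).Nonempty)
    (κ₁ κ₂ : Fam) (h₁ : IsAC S₁ κ₁) (hs₁ : sp κ₁ = S₁)
    (h₂ : IsAC S₂ κ₂) (hs₂ : sp κ₂ = S₂)
    (hneq : proj (S₁ ∩ S₂) κ₁ ≠ proj (S₁ ∩ S₂) κ₂) :
    ¬ amle (joinAC κ₁ κ₂) (xprod κ₁ κ₂) := by
  intro hle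
  set M := S₁ ∩ S₂ with hM
  apply hneq
  have key : ∀ A ∈ κ₁ ∪ κ₂, ∃ A' ∈ κ₁, ∃ B' ∈ κ₂, A ∩ M ⊆ A' ∩ B' ∩ M := by
    intro A hA
    obtain ⟨m, hm, hAm⟩ := exists_max_above _ hA
    obtain ⟨X, hX, hmX⟩ := hle m hm
    have hX' : X ∈ ((κ₁ ×ˢ κ₂).image fun p =>
        (p.1 \ sp κ₂) ∪ (p.2 \ sp κ₁) ∪ (p.1 ∩ p.2)) :=
      Finset.mem_of_mem_filter _ hX
    simp only [Finset.mem_image, Finset.mem_product] at hX'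
    obtain ⟨⟨A', B'⟩, ⟨hA', hB'⟩, rfl⟩ := hX'
    refine ⟨A', hA', B', hB', ?_⟩
    intro x hx
    rw [Finset.mem_inter] at hx
    obtain ⟨hxA, hxM⟩ := hx
    rw [hM, Finset.mem_inter] at hxM
    have hxs₁ : x ∈ sp κ₁ := hs₁ ▸ hxM.1
    have hxs₂ : x ∈ sp κ₂ := hs₂ ▸ hxM.2
    have hxX : x ∈ (A' \ sp κ₂) ∪ (B' \ sp κ₁) ∪ (A' ∩ B') := hmX (hAm hxA)
    simp only [Finset.mem_union, Finset.mem_sdiff, Finset.mem_inter] at hxX ⊢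
    rcases hxX with (⟨_, h⟩ | ⟨_, h⟩) | h
    · exact absurd hxs₂ h
    · exact absurd hxs₁ h
    · exact ⟨⟨h.1, h.2⟩, hM ▸ Finset.mem_inter.2 hxM⟩
  unfold proj
  apply maxels_eq_of_cofinal
  · intro x hx
    simp only [Finset.mem_image] at hx
    obtain ⟨A, hA, rfl⟩ := hx
    obtain ⟨A', _, B', hB', hsub⟩ := key A (Finset.mem_union_left _ hA)
    refine ⟨B' ∩ M, Finset.mem_image_of_mem _ hB', hsub.trans ?_⟩
    intro y hy
    simp only [Finset.mem_inter] at hy ⊢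
    exact ⟨hy.1.2, hy.2⟩
  · intro x hx
    simp only [Finset.mem_image] at hx
    obtain ⟨B, hB, rfl⟩ := hx
    obtain ⟨A', hA', B', _, hsub⟩ := key B (Finset.mem_union_right _ hB)
    refine ⟨A' ∩ M, Finset.mem_image_of_mem _ hA', hsub.trans ?_⟩
    intro y hy
    simp only [Finset.mem_inter] at hy ⊢
    exact ⟨hy.1.1, hy.2⟩
end

section
/- Interval counting recursion: for 1 ≤ n₁ < n, |AMT(1,n)| = 1 + Σ_{α ∈ AMT(1,n₁)\{∅}, β ∈ AMT(n₁+1,n)\{∅}} |[α ∨ β, α × β]|, where AMT(a,b) is the set of antichains of subsets of {a,...,b}. -/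
open Finset

lemma exists_maxels_superset {S : Fam} {A : Finset ℕ} (hA : A ∈ S) :
    ∃ M ∈ maxels S, A ⊆ M := by
  obtain ⟨m, hm, hmax⟩ := (S.filter (A ⊆ ·)).exists_maximal ⟨A, by simp [hA]⟩
  simp only [Finset.mem_filter] at hm
  refine ⟨m, mem_maxels.mpr ⟨hm.1, ?_⟩, hm.2⟩
  intro B hB hmB
  by_contra hne
  exact hne (Finset.Subset.antisymm hmB
    (hmax (Finset.mem_filter.mpr ⟨hB, hm.2.trans hmB⟩) hmB))

lemma mem_AMTf {N : Finset ℕ} {κ : Fam} : κ ∈ AMTf N ↔ IsAC N κ := by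
  unfold AMTf
  simp only [Finset.mem_filter, Finset.mem_powerset, and_iff_right_iff_imp]
  intro h A hA
  exact Finset.mem_powerset.mpr (h.1 A hA)

lemma maxels_eq_of {α S : Fam}
    (hanti : ∀ A ∈ α, ∀ B ∈ α, A ⊆ B → A = B)
    (h1 : ∀ s ∈ S, ∃ a ∈ α, s ⊆ a)
    (h2 : ∀ a ∈ α, ∃ s ∈ S, a ⊆ s) :
    maxels S = α := by
  ext m
  rw [mem_maxels]
  constructor
  · rintro ⟨hmS, hmax⟩
    obtain ⟨a, ha, hma⟩ := h1 m hmS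
    obtain ⟨s, hs, has⟩ := h2 a ha
    obtain rfl : m = s := hmax s hs (hma.trans has)
    obtain rfl : a = m := Finset.Subset.antisymm has hma
    exact ha
  · intro hm
    have key : ∀ B ∈ S, m ⊆ B → m = B := by
      intro B hB hmB
      obtain ⟨a', ha', hBa'⟩ := h1 B hB
      obtain rfl : m = a' := hanti _ hm _ ha' (hmB.trans hBa')
      exact Finset.Subset.antisymm hmB hBa'
    obtain ⟨s, hs, hms⟩ := h2 _ hm
    exact ⟨by rw [key s hs hms]; exact hs, key⟩

lemma amle_maxels_right {κ S : Fam} (h : ∀ A ∈ κ, ∃ B ∈ S, A ⊆ B) :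
    amle κ (maxels S) := by
  intro A hA
  obtain ⟨B, hB, hAB⟩ := h A hA
  obtain ⟨M, hM, hBM⟩ := exists_maxels_superset hB
  exact ⟨M, hM, hAB.trans hBM⟩

lemma amle_maxels_left {κ S : Fam} (h : ∀ B ∈ S, ∃ A ∈ κ, B ⊆ A) :
    amle (maxels S) κ := fun B hB => h B (mem_maxels.mp hB).1

lemma isAC_proj (M : Finset ℕ) (κ : Fam) : IsAC M (proj M κ) := by
  constructor
  · intro A hA
    obtain ⟨B, _, rfl⟩ := Finset.mem_image.mp (mem_maxels.mp hA).1
    exact Finset.inter_subset_right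
  · intro A hA B hB hAB
    exact (mem_maxels.mp hA).2 B (mem_maxels.mp hB).1 hAB

lemma proj_nonempty {M : Finset ℕ} {κ : Fam} (h : κ.Nonempty) :
    (proj M κ).Nonempty := by
  obtain ⟨A, hA⟩ := h
  obtain ⟨m, hm, -⟩ := exists_maxels_superset (Finset.mem_image_of_mem (· ∩ M) hA)
  exact ⟨m, hm⟩

lemma sp_subset {M : Finset ℕ} {α : Fam} (h : ∀ a ∈ α, a ⊆ M) : sp α ⊆ M :=
  Finset.sup_le fun x hx => h x hx

lemma gen_eq {M₁ M₂ : Finset ℕ} (hd : Disjoint M₁ M₂) {α β : Fam}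
    (hα : ∀ a ∈ α, a ⊆ M₁) (hβ : ∀ b ∈ β, b ⊆ M₂) {a b : Finset ℕ}
    (ha : a ∈ α) (hb : b ∈ β) :
    (a \ sp β) ∪ (b \ sp α) ∪ (a ∩ b) = a ∪ b := by
  have hspα : sp α ⊆ M₁ := sp_subset hα
  have hspβ : sp β ⊆ M₂ := sp_subset hβ
  ext x
  simp only [Finset.mem_union, Finset.mem_sdiff, Finset.mem_inter]
  constructor
  · tauto
  · rintro (hx | hx)
    · exact Or.inl (Or.inl ⟨hx, fun hc =>
        Finset.disjoint_left.mp hd (hα a ha hx) (hspβ hc)⟩)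
    · exact Or.inl (Or.inr ⟨hx, fun hc =>
        Finset.disjoint_left.mp hd (hspα hc) (hβ b hb hx)⟩)

lemma union_mem_xprod_gens {M₁ M₂ : Finset ℕ} (hd : Disjoint M₁ M₂) {α β : Fam}
    (hα : ∀ a ∈ α, a ⊆ M₁) (hβ : ∀ b ∈ β, b ⊆ M₂) {a b : Finset ℕ}
    (ha : a ∈ α) (hb : b ∈ β) :
    a ∪ b ∈ (α ×ˢ β).image fun p => (p.1 \ sp β) ∪ (p.2 \ sp α) ∪ (p.1 ∩ p.2) :=
  Finset.mem_image.mpr ⟨(a, b), Finset.mem_product.mpr ⟨ha, hb⟩,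
    gen_eq hd hα hβ ha hb⟩

lemma xprod_mem_decomp {M₁ M₂ : Finset ℕ} (hd : Disjoint M₁ M₂) {α β : Fam}
    (hα : ∀ a ∈ α, a ⊆ M₁) (hβ : ∀ b ∈ β, b ⊆ M₂) {x : Finset ℕ}
    (hx : x ∈ xprod α β) : ∃ a ∈ α, ∃ b ∈ β, x = a ∪ b := by
  obtain ⟨p, hp, rfl⟩ := Finset.mem_image.mp (mem_maxels.mp hx).1
  obtain ⟨hp1, hp2⟩ := Finset.mem_product.mp hp
  exact ⟨p.1, hp1, p.2, hp2, gen_eq hd hα hβ hp1 hp2⟩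

/-- Key uniqueness lemma: the projection of any κ in the interval is α. -/
lemma proj_eq {M₁ M₂ : Finset ℕ} (hd : Disjoint M₁ M₂) {α β κ : Fam}
    (hα1 : ∀ a ∈ α, a ⊆ M₁) (hαa : ∀ A ∈ α, ∀ B ∈ α, A ⊆ B → A = B)
    (hβ1 : ∀ b ∈ β, b ⊆ M₂)
    (hκne : κ.Nonempty)
    (hx : ∀ A ∈ κ, ∃ a ∈ α, ∃ b ∈ β, A ⊆ a ∪ b)
    (hj : ∀ a ∈ α, a ≠ ∅ → ∃ A ∈ κ, a ⊆ A) :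
    proj M₁ κ = α := by
  apply maxels_eq_of hαa
  · -- every A ∩ M₁ is below some a ∈ α
    intro s hs
    obtain ⟨A, hA, rfl⟩ := Finset.mem_image.mp hs
    obtain ⟨a, ha, b, hb, hAab⟩ := hx A hA
    refine ⟨a, ha, fun x hxm => ?_⟩
    obtain ⟨hxA, hxM⟩ := Finset.mem_inter.mp hxm
    rcases Finset.mem_union.mp (hAab hxA) with h | h
    · exact h
    · exact absurd hxM (Finset.disjoint_right.mp hd (hβ1 b hb h))
  · -- every a ∈ α is below some A ∩ M₁
    intro a ha
    rcases eq_or_ne a ∅ with rfl | hane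
    · obtain ⟨A, hA⟩ := hκne
      exact ⟨A ∩ M₁, Finset.mem_image_of_mem _ hA, Finset.empty_subset _⟩
    · obtain ⟨A, hA, haA⟩ := hj a ha hane
      exact ⟨A ∩ M₁, Finset.mem_image_of_mem _ hA,
        Finset.subset_inter haA (hα1 a ha)⟩

lemma forward_interval {M₁ M₂ : Finset ℕ} (hd : Disjoint M₁ M₂) {κ : Fam}
    (hκ : IsAC (M₁ ∪ M₂) κ) :
    amle (joinAC (proj M₁ κ) (proj M₂ κ)) κ ∧
    amle κ (xprod (proj M₁ κ) (proj M₂ κ)) := by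
  have hα1 := (isAC_proj M₁ κ).1
  have hβ1 := (isAC_proj M₂ κ).1
  constructor
  · apply amle_maxels_left
    intro B hB
    rcases Finset.mem_union.mp hB with h | h
    · obtain ⟨A, hA, rfl⟩ := Finset.mem_image.mp (mem_maxels.mp h).1
      exact ⟨A, hA, Finset.inter_subset_left⟩
    · obtain ⟨A, hA, rfl⟩ := Finset.mem_image.mp (mem_maxels.mp h).1
      exact ⟨A, hA, Finset.inter_subset_left⟩
  · apply amle_maxels_right
    intro A hA
    obtain ⟨a, ha, hAa⟩ := exists_maxels_superset (Finset.mem_image_of_mem (· ∩ M₁) hA)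
    obtain ⟨b, hb, hAb⟩ := exists_maxels_superset (Finset.mem_image_of_mem (· ∩ M₂) hA)
    refine ⟨a ∪ b, union_mem_xprod_gens hd hα1 hβ1 ha hb, fun x hx => ?_⟩
    rcases Finset.mem_union.mp (hκ.1 A hA hx) with h | h
    · exact Finset.mem_union_left _ (hAa (Finset.mem_inter.mpr ⟨hx, h⟩))
    · exact Finset.mem_union_right _ (hAb (Finset.mem_inter.mpr ⟨hx, h⟩))

lemma backward_interval {M₁ M₂ : Finset ℕ} (hd : Disjoint M₁ M₂) {α β κ : Fam}
    (hα : IsAC M₁ α) (hαne : α.Nonempty) (hβ : IsAC M₂ β) (hβne : β.Nonempty)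
    (hj0 : amle (joinAC α β) κ) (hx0 : amle κ (xprod α β)) :
    proj M₁ κ = α ∧ proj M₂ κ = β ∧ κ.Nonempty := by
  have hκne : κ.Nonempty := by
    obtain ⟨a, ha⟩ := hαne
    obtain ⟨m, hm, -⟩ := exists_maxels_superset (Finset.mem_union_left β ha)
    obtain ⟨A, hA, -⟩ := hj0 m hm
    exact ⟨A, hA⟩
  have hx : ∀ A ∈ κ, ∃ a ∈ α, ∃ b ∈ β, A ⊆ a ∪ b := by
    intro A hA
    obtain ⟨x, hxmem, hAx⟩ := hx0 A hA
    obtain ⟨a, ha, b, hb, rfl⟩ := xprod_mem_decomp hd hα.1 hβ.1 hxmem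
    exact ⟨a, ha, b, hb, hAx⟩
  have hjα : ∀ a ∈ α, a ≠ ∅ → ∃ A ∈ κ, a ⊆ A := by
    intro a ha hane
    apply hj0
    rw [joinAC, mem_maxels]
    refine ⟨Finset.mem_union_left β ha, fun B hB haB => ?_⟩
    rcases Finset.mem_union.mp hB with h | h
    · exact hα.2 a ha B h haB
    · exfalso
      obtain ⟨x, hx⟩ := Finset.nonempty_iff_ne_empty.mpr hane
      exact Finset.disjoint_left.mp hd (hα.1 a ha hx) (hβ.1 B h (haB hx))
  have hjβ : ∀ b ∈ β, b ≠ ∅ → ∃ A ∈ κ, b ⊆ A := by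
    intro b hb hbne
    apply hj0
    rw [joinAC, mem_maxels]
    refine ⟨Finset.mem_union_right α hb, fun B hB hbB => ?_⟩
    rcases Finset.mem_union.mp hB with h | h
    · exfalso
      obtain ⟨x, hx⟩ := Finset.nonempty_iff_ne_empty.mpr hbne
      exact Finset.disjoint_left.mp hd (hα.1 B h (hbB hx)) (hβ.1 b hb hx)
    · exact hβ.2 b hb B h hbB
  refine ⟨proj_eq hd hα.1 hα.2 hβ.1 hκne hx hjα, ?_, hκne⟩
  apply proj_eq hd.symm hβ.1 hβ.2 hα.1 hκne ?_ hjβ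
  intro A hA
  obtain ⟨a, ha, b, hb, hAab⟩ := hx A hA
  exact ⟨b, hb, a, ha, by rwa [Finset.union_comm]⟩

lemma main_generic (M₁ M₂ : Finset ℕ) (hd : Disjoint M₁ M₂) :
    (AMTf (M₁ ∪ M₂)).card =
      1 + ∑ α ∈ (AMTf M₁).erase (∅ : Fam),
            ∑ β ∈ (AMTf M₂).erase (∅ : Fam),
              (intervalF (M₁ ∪ M₂) (joinAC α β) (xprod α β)).card := by
  classical
  have hempty : (∅ : Fam) ∈ AMTf (M₁ ∪ M₂) :=
    mem_AMTf.mpr ⟨fun A hA => absurd hA (Finset.notMem_empty A),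
      fun A hA => absurd hA (Finset.notMem_empty A)⟩
  rw [← Finset.sum_product' ((AMTf M₁).erase ∅) ((AMTf M₂).erase ∅)
      (fun α β => (intervalF (M₁ ∪ M₂) (joinAC α β) (xprod α β)).card),
    ← Finset.card_erase_add_one hempty, add_comm]
  congr 1
  have hmem : ∀ κ ∈ (AMTf (M₁ ∪ M₂)).erase ∅,
      (proj M₁ κ, proj M₂ κ) ∈ ((AMTf M₁).erase ∅) ×ˢ ((AMTf M₂).erase ∅) := by
    intro κ hκ
    obtain ⟨hne, hκ⟩ := Finset.mem_erase.mp hκ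
    have hκne : κ.Nonempty := Finset.nonempty_iff_ne_empty.mpr hne
    rw [Finset.mem_product]
    constructor
    · exact Finset.mem_erase.mpr ⟨Finset.nonempty_iff_ne_empty.mp (proj_nonempty hκne),
        mem_AMTf.mpr (isAC_proj M₁ κ)⟩
    · exact Finset.mem_erase.mpr ⟨Finset.nonempty_iff_ne_empty.mp (proj_nonempty hκne),
        mem_AMTf.mpr (isAC_proj M₂ κ)⟩
  rw [Finset.card_eq_sum_card_fiberwise hmem]
  refine Finset.sum_congr rfl fun p hp => ?_
  obtain ⟨hp1, hp2⟩ := Finset.mem_product.mp hp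
  obtain ⟨hαne, hα⟩ := Finset.mem_erase.mp hp1
  obtain ⟨hβne, hβ⟩ := Finset.mem_erase.mp hp2
  congr 1
  ext κ
  simp only [Finset.mem_filter, Finset.mem_erase, intervalF, Prod.ext_iff]
  constructor
  · rintro ⟨⟨hne, hκ⟩, h1, h2⟩
    have hκAC := mem_AMTf.mp hκ
    rw [← h1, ← h2]
    exact ⟨hκ, (forward_interval hd hκAC).1, (forward_interval hd hκAC).2⟩
  · rintro ⟨hκ, hj0, hx0⟩
    obtain ⟨e1, e2, hκne⟩ := backward_interval hd (mem_AMTf.mp hα)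
      (Finset.nonempty_iff_ne_empty.mpr hαne) (mem_AMTf.mp hβ)
      (Finset.nonempty_iff_ne_empty.mpr hβne) hj0 hx0
    exact ⟨⟨Finset.nonempty_iff_ne_empty.mp hκne, hκ⟩, e1, e2⟩

/-- interval counting recursion. -/
theorem interval_recursion (n n₁ : ℕ) (h1 : 1 ≤ n₁) (h2 : n₁ < n) :
    (AMTf (Finset.Icc 1 n)).card =
      1 + ∑ α ∈ (AMTf (Finset.Icc 1 n₁)).erase (∅ : Fam),
            ∑ β ∈ (AMTf (Finset.Icc (n₁ + 1) n)).erase (∅ : Fam),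
              (intervalF (Finset.Icc 1 n) (joinAC α β) (xprod α β)).card := by
  have hd : Disjoint (Finset.Icc 1 n₁) (Finset.Icc (n₁ + 1) n) := by
    rw [Finset.disjoint_left]
    intro x hx hx'
    rw [Finset.mem_Icc] at hx hx'
    omega
  have hU : Finset.Icc 1 n₁ ∪ Finset.Icc (n₁ + 1) n = Finset.Icc 1 n := by
    ext x
    simp only [Finset.mem_union, Finset.mem_Icc]
    omega
  rw [← hU]
  exact main_generic _ _ hd
end
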